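/- arXiv:2602.18957 — 3 statements merged into one kernel-verified Lean document; each statement's English description precedes it below -/
import Mathlib

section
/- Let E be a nonempty finite set, let w : E → ℝ assign a strictly positive weight w(e) to every e ∈ E, and let (T_e)_{e∈E} be independent real random variables on a probability space with T_e Exp(w(e))-distributed. Let S = min_{e∈E} T_e and let F be the almost surely unique index e ∈ E attaining this minimum. Then the random variables S and F are independent. -/
open MeasureTheory ProbabilityTheory

open Real Set Filter Topology in
lemma aux_integral_exp {d : ℝ} (hd : 0 < d) (a : ℝ) :
    ∫ x in Set.Ioi a, Real.exp (-(d * x)) = Real.exp (-(d * a)) / d := by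
  have hderiv : ∀ x ∈ Ici a, HasDerivAt (fun y => -Real.exp (-(d * y)) / d)
      (Real.exp (-(d * x))) x := by
    intro x _
    have h := (ProbabilityTheory.hasDerivAt_neg_exp_mul_exp (r := d) (x := x)).div_const d
    simpa [mul_div_assoc, mul_div_cancel_left₀ _ hd.ne'] using h
  have hint : IntegrableOn (fun x => Real.exp (-(d * x))) (Ioi a) := by
    simpa [neg_mul] using exp_neg_integrableOn_Ioi a hd
  have htend : Tendsto (fun y => -Real.exp (-(d * y)) / d) atTop (𝓝 0) := by
    have h1 : Tendsto (fun y : ℝ => -(d * y)) atTop atBot := by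
      apply tendsto_neg_atBot_iff.mpr
      exact Tendsto.const_mul_atTop hd tendsto_id
    have h2 : Tendsto (fun y : ℝ => Real.exp (-(d * y))) atTop (𝓝 0) :=
      Real.tendsto_exp_atBot.comp h1
    simpa [neg_zero, zero_div] using (h2.neg).div_const d
  have := integral_Ioi_of_hasDerivAt_of_tendsto
    ((((Real.continuous_exp.comp (continuous_const.mul continuous_id).neg).neg).div_const
      d).continuousWithinAt) (fun x hx => hderiv x (mem_Ici.mpr hx.le)) hint htend
  -- careful with interior; use the version requiring Ici deriv
  rw [this]
  change 0 - (-Real.exp (-(d * a))) / d = _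
  ring

set_option maxHeartbeats 1000000 in
open Real Set Filter in
lemma aux_lintegral_exp {r c : ℝ} (hr : 0 < r) (hc : 0 ≤ c) (a : ℝ) :
    ∫⁻ x in Set.Ioi a, ENNReal.ofReal (Real.exp (-(c * max x 0))) ∂(expMeasure r)
      = ENNReal.ofReal (r / (r + c) * Real.exp (-((r + c) * max a 0))) := by
  have hd : 0 < r + c := by linarith
  have hexp : expMeasure r = volume.withDensity (exponentialPDF r) := rfl
  have hgm : Measurable fun x : ℝ => ENNReal.ofReal (Real.exp (-(c * max x 0))) :=
    (Real.continuous_exp.comp ((continuous_const.mul (continuous_id.max continuous_const)).neg)).measurable.ennreal_ofReal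
  rw [hexp, setLIntegral_withDensity_eq_setLIntegral_mul volume
    (show Measurable (exponentialPDF r) from (measurable_exponentialPDFReal r).ennreal_ofReal)
    hgm measurableSet_Ioi]
  simp only [Pi.mul_apply]
  have hstep : ∀ b : ℝ, 0 ≤ b →
      ∫⁻ x in Set.Ioi b, exponentialPDF r x * ENNReal.ofReal (Real.exp (-(c * max x 0)))
        = ENNReal.ofReal (r / (r + c) * Real.exp (-((r + c) * b))) := by
    intro b hb
    have hcong : ∫⁻ x in Set.Ioi b, exponentialPDF r x * ENNReal.ofReal (Real.exp (-(c * max x 0)))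
        = ∫⁻ x in Set.Ioi b, ENNReal.ofReal (r * Real.exp (-((r + c) * x))) := by
      apply setLIntegral_congr_fun measurableSet_Ioi
      intro x hx
      have hx0 : (0:ℝ) ≤ x := le_trans hb (le_of_lt hx)
      dsimp only
      rw [exponentialPDF_of_nonneg hx0, max_eq_left hx0,
        ← ENNReal.ofReal_mul (by positivity)]
      congr 1
      rw [mul_assoc, ← Real.exp_add]
      ring_nf
    have hi : IntegrableOn (fun x => r * Real.exp (-((r + c) * x))) (Set.Ioi b) := by
      have h := exp_neg_integrableOn_Ioi b hd
      simp only [neg_mul] at h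
      exact h.const_mul r
    have hnn : 0 ≤ᵐ[volume.restrict (Set.Ioi b)] fun x => r * Real.exp (-((r + c) * x)) := by
      filter_upwards with x
      positivity
    rw [hcong, ← ofReal_integral_eq_lintegral_ofReal hi hnn,
      MeasureTheory.integral_const_mul, aux_integral_exp hd]
    congr 1
    ring
  rcases le_or_gt 0 a with ha | ha
  · rw [max_eq_left ha]
    exact hstep a ha
  · rw [max_eq_right ha.le]
    have hsplit : Set.Ioi a = Set.Ioc a 0 ∪ Set.Ioi 0 := (Set.Ioc_union_Ioi_eq_Ioi ha.le).symm
    rw [hsplit, lintegral_union measurableSet_Ioi (Set.Ioc_disjoint_Ioi le_rfl)]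
    have hzero : ∫⁻ x in Set.Ioc a 0,
        exponentialPDF r x * ENNReal.ofReal (Real.exp (-(c * max x 0))) = 0 := by
      rw [setLIntegral_congr Ioo_ae_eq_Ioc.symm]
      rw [setLIntegral_congr_fun measurableSet_Ioo
        (by intro x hx; dsimp only; rw [exponentialPDF_of_neg hx.2, zero_mul] :
          Set.EqOn (fun x => exponentialPDF r x * ENNReal.ofReal (Real.exp (-(c * max x 0))))
            (fun _ => 0) (Set.Ioo a 0))]
      simp
    rw [hzero, zero_add]
    exact hstep 0 le_rfl

lemma aux_expMeasure_Ioi {r : ℝ} (hr : 0 < r) (a : ℝ) :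
    expMeasure r (Set.Ioi a) = ENNReal.ofReal (Real.exp (-(r * max a 0))) := by
  have h := aux_lintegral_exp hr le_rfl a
  simp only [zero_mul, neg_zero, Real.exp_zero, ENNReal.ofReal_one, setLIntegral_one,
    add_zero, div_self hr.ne', one_mul] at h
  exact h

lemma aux_measurable_inf' {ι Ω : Type*} [MeasurableSpace Ω] (s : Finset ι) (hs : s.Nonempty)
    (f : ι → Ω → ℝ) (hf : ∀ i, Measurable (f i)) :
    Measurable (fun ω => s.inf' hs fun i => f i ω) := by
  induction hs using Finset.Nonempty.cons_induction with
  | singleton i => simpa using hf i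
  | cons i s hi hne ih =>
    rw [show (fun ω => (Finset.cons i s hi).inf' (Finset.cons_nonempty hi) fun j => f j ω)
      = fun ω => f i ω ⊓ (s.inf' hne fun j => f j ω) from funext fun ω => Finset.inf'_cons hne (fun j => f j ω)]
    exact Measurable.min (hf i) ih

/-- Let `E` be a nonempty finite set, `w : E → ℝ` strictly positive weights,
and `(T e)_{e ∈ E}` independent random variables with `T e` exponentially distributed with
rate `w e`. Let `S = min_{e ∈ E} T e` and let `F` be the almost surely unique index attaining
this minimum. Then `S` and `F` are independent. -/
theorem stmt_0
    {Ω : Type*} [MeasurableSpace Ω] (P : Measure Ω) [IsProbabilityMeasure P]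
    {E : Type*} [Fintype E] [Nonempty E] [MeasurableSpace E] [MeasurableSingletonClass E]
    (w : E → ℝ) (hw : ∀ e, 0 < w e)
    (T : E → Ω → ℝ) (hTmeas : ∀ e, Measurable (T e))
    (hindep : iIndepFun T P)
    (hdist : ∀ e, Measure.map (T e) P = expMeasure (w e))
    (S : Ω → ℝ) (hS : ∀ ω, S ω = Finset.univ.inf' Finset.univ_nonempty (fun e => T e ω))
    (F : Ω → E) (hFmeas : Measurable F)
    (hF : ∀ᵐ ω ∂P, ∀ e, e ≠ F ω → T (F ω) ω < T e ω) :
    IndepFun S F P := by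
  classical
  by_cases hNT : Nontrivial E
  case neg =>
    -- E has a single element; F is constant
    have hsub : Subsingleton E := not_nontrivial_iff_subsingleton.mp hNT
    rw [indepFun_iff_measure_inter_preimage_eq_mul]
    intro s t _ _
    rcases t.eq_empty_or_nonempty with rfl | ⟨x, hx⟩
    · simp
    · have ht : F ⁻¹' t = Set.univ := by
        ext ω
        simpa using (Subsingleton.elim x (F ω)) ▸ hx
      rw [ht]
      simp
  case pos =>
    set W : ℝ := ∑ f, w f with hWdef
    have hW : 0 < W := Finset.sum_pos (fun f _ => hw f) Finset.univ_nonempty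
    have hSmeas : Measurable S := by
      have : S = fun ω => Finset.univ.inf' Finset.univ_nonempty fun e => T e ω := funext hS
      rw [this]
      exact aux_measurable_inf' _ _ T hTmeas
    -- core computation
    have hcore : ∀ (e : E) (a : ℝ),
        P {ω | a < T e ω ∧ ∀ f, f ≠ e → T e ω < T f ω}
          = ENNReal.ofReal (w e / W * Real.exp (-(W * max a 0))) := by
      intro e a
      set s : Finset E := Finset.univ.erase e with hsdef
      have hsne : s.Nonempty := by
        obtain ⟨f, hf⟩ := exists_ne e
        exact ⟨f, Finset.mem_erase.2 ⟨hf, Finset.mem_univ f⟩⟩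
      set c : ℝ := ∑ f ∈ s, w f with hcdef
      have hc : 0 < c := Finset.sum_pos (fun f _ => hw f) hsne
      have hWc : w e + c = W := Finset.add_sum_erase _ w (Finset.mem_univ e)
      set G : Ω → (↥s → ℝ) := fun ω i => T i ω with hGdef
      have hGmeas : Measurable G := measurable_pi_lambda _ fun i => hTmeas i
      have hindepEG : IndepFun (T e) G P := by
        have hdisj : Disjoint ({e} : Finset E) s := by
          simp [hsdef]
        have h := hindep.indepFun_finset {e} s hdisj hTmeas
        exact h.comp (measurable_pi_apply (⟨e, Finset.mem_singleton_self e⟩ : ({e} : Finset E)))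
          measurable_id
      haveI : IsProbabilityMeasure (Measure.map G P) :=
        Measure.isProbabilityMeasure_map hGmeas.aemeasurable
      haveI : IsProbabilityMeasure (expMeasure (w e)) := isProbabilityMeasure_expMeasure (hw e)
      have hGx : ∀ x : ℝ, P (G ⁻¹' {v | ∀ i, x < v i})
          = ENNReal.ofReal (Real.exp (-(c * max x 0))) := by
        intro x
        have h1 : G ⁻¹' {v | ∀ i, x < v i} = ⋂ f ∈ s, T f ⁻¹' Set.Ioi x := by
          ext ω
          simp [hGdef, Subtype.forall]
        rw [h1, hindep.measure_inter_preimage_eq_mul s (fun f _ => measurableSet_Ioi)]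
        have h2 : ∀ f, P (T f ⁻¹' Set.Ioi x)
            = ENNReal.ofReal (Real.exp (-(w f * max x 0))) := fun f => by
          rw [← Measure.map_apply (hTmeas f) measurableSet_Ioi, hdist f,
            aux_expMeasure_Ioi (hw f)]
        simp_rw [h2]
        rw [← ENNReal.ofReal_prod_of_nonneg (fun _ _ => (Real.exp_pos _).le), ← Real.exp_sum]
        congr 2
        rw [Finset.sum_neg_distrib, ← Finset.sum_mul]
      -- the joint distribution
      set D : Set (ℝ × (↥s → ℝ)) := {p | a < p.1 ∧ ∀ i, p.1 < p.2 i} with hDdef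
      have hD : MeasurableSet D := by
        have : D = {p : ℝ × (↥s → ℝ) | a < p.1} ∩ ⋂ i, {p : ℝ × (↥s → ℝ) | p.1 < p.2 i} := by
          ext p
          simp [hDdef]
        rw [this]
        exact (measurableSet_lt measurable_const measurable_fst).inter
          (MeasurableSet.iInter fun i => measurableSet_lt measurable_fst
            ((measurable_pi_apply i).comp measurable_snd))
      have hev : {ω | a < T e ω ∧ ∀ f, f ≠ e → T e ω < T f ω}
          = (fun ω => (T e ω, G ω)) ⁻¹' D := by
        ext ω
        simp only [Set.mem_setOf_eq, Set.mem_preimage, hDdef, hGdef]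
        constructor
        · rintro ⟨h1, h2⟩
          exact ⟨h1, fun i => h2 i (Finset.mem_erase.mp i.2).1⟩
        · rintro ⟨h1, h2⟩
          refine ⟨h1, fun f hf => h2 ⟨f, Finset.mem_erase.2 ⟨hf, Finset.mem_univ f⟩⟩⟩
      have hjoint : Measure.map (fun ω => (T e ω, G ω)) P
          = (expMeasure (w e)).prod (Measure.map G P) := by
        rw [← hdist e]
        exact (indepFun_iff_map_prod_eq_prod_map_map (hTmeas e).aemeasurable
          hGmeas.aemeasurable).mp hindepEG
      rw [hev, ← Measure.map_apply ((hTmeas e).prodMk hGmeas) hD, hjoint,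
        Measure.prod_apply hD]
      have hsec : (fun x => Measure.map G P (Prod.mk x ⁻¹' D))
          = (Set.Ioi a).indicator (fun x => ENNReal.ofReal (Real.exp (-(c * max x 0)))) := by
        funext x
        by_cases hx : a < x
        · have h1 : Prod.mk x ⁻¹' D = {v : ↥s → ℝ | ∀ i, x < v i} := by
            ext v
            simp [hDdef, hx]
          rw [h1, Set.indicator_of_mem (Set.mem_Ioi.mpr hx)]
          have hmeas2 : MeasurableSet {v : ↥s → ℝ | ∀ i, x < v i} := by
            rw [Set.setOf_forall]
            exact MeasurableSet.iInter fun i => (measurable_pi_apply i) measurableSet_Ioi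
          rw [Measure.map_apply hGmeas hmeas2, hGx x]
        · have h1 : Prod.mk x ⁻¹' D = ∅ := by
            ext v
            simp [hDdef, hx]
          rw [h1, Set.indicator_of_notMem (fun h => hx (Set.mem_Ioi.mp h))]
          simp
      rw [hsec, lintegral_indicator measurableSet_Ioi, aux_lintegral_exp (hw e) hc.le a, hWc]
    -- S, F events probabilities
    have hkeyset : ∀ (e : E) (a : ℝ), (S ⁻¹' Set.Ioi a ∩ F ⁻¹' {e} : Set Ω)
        =ᵐ[P] {ω | a < T e ω ∧ ∀ f, f ≠ e → T e ω < T f ω} := by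
      intro e a
      rw [Filter.eventuallyEq_set]
      filter_upwards [hF] with ω hω
      simp only [Set.mem_inter_iff, Set.mem_preimage, Set.mem_Ioi, Set.mem_singleton_iff,
        Set.mem_setOf_eq]
      constructor
      · rintro ⟨hSω, rfl⟩
        refine ⟨lt_of_lt_of_le hSω ?_, fun f hf => hω f hf⟩
        rw [hS ω]
        exact Finset.inf'_le _ (Finset.mem_univ _)
      · rintro ⟨haT, hlt⟩
        have hFe : F ω = e := by
          by_contra hne
          exact lt_asymm (hω e (Ne.symm hne)) (hlt (F ω) hne)
        refine ⟨?_, hFe⟩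
        have hSe : S ω = T e ω := by
          rw [hS ω]
          refine le_antisymm (Finset.inf'_le _ (Finset.mem_univ e))
            (Finset.le_inf' _ _ fun f _ => ?_)
          rcases eq_or_ne f e with rfl | hf
          · exact le_rfl
          · exact (hlt f hf).le
        rw [hSe]
        exact haT
    have hkey : ∀ (e : E) (a : ℝ), P (S ⁻¹' Set.Ioi a ∩ F ⁻¹' {e})
        = ENNReal.ofReal (w e / W * Real.exp (-(W * max a 0))) := fun e a =>
      (measure_congr (hkeyset e a)).trans (hcore e a)
    -- T nonneg a.s.
    have hT0 : ∀ᵐ ω ∂P, ∀ f, 0 ≤ T f ω := by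
      rw [ae_all_iff]
      intro f
      have h0 : P (T f ⁻¹' Set.Iio 0) = 0 := by
        rw [← Measure.map_apply (hTmeas f) measurableSet_Iio, hdist f]
        show (volume.withDensity (exponentialPDF (w f))) (Set.Iio 0) = 0
        rw [withDensity_apply _ measurableSet_Iio]
        exact lintegral_exponentialPDF_of_nonpos le_rfl
      rw [ae_iff]
      simp only [not_le]
      exact h0
    have hFe : ∀ e, P (F ⁻¹' {e}) = ENNReal.ofReal (w e / W) := by
      intro e
      have hae : (F ⁻¹' {e} : Set Ω) =ᵐ[P] ((S ⁻¹' Set.Ioi (-1) ∩ F ⁻¹' {e} : Set Ω)) := by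
        rw [Filter.eventuallyEq_set]
        filter_upwards [hT0] with ω h0
        simp only [Set.mem_inter_iff, Set.mem_preimage, Set.mem_Ioi, Set.mem_singleton_iff]
        refine ⟨fun h => ⟨?_, h⟩, fun h => h.2⟩
        have : (0:ℝ) ≤ S ω := by
          rw [hS ω]
          exact Finset.le_inf' _ _ fun f _ => h0 f
        linarith
      rw [measure_congr hae, hkey e (-1)]
      norm_num
    have hSa : ∀ a : ℝ, P (S ⁻¹' Set.Ioi a)
        = ENNReal.ofReal (Real.exp (-(W * max a 0))) := by
      intro a
      have hun : S ⁻¹' Set.Ioi a = ⋃ e, (S ⁻¹' Set.Ioi a ∩ F ⁻¹' {e}) := by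
        ext ω
        simp only [Set.mem_iUnion, Set.mem_inter_iff, Set.mem_preimage, Set.mem_singleton_iff]
        exact ⟨fun h => ⟨F ω, h, rfl⟩, fun ⟨e, h, _⟩ => h⟩
      rw [hun, measure_iUnion]
      · rw [tsum_fintype]
        simp_rw [hkey _ a]
        rw [← ENNReal.ofReal_sum_of_nonneg (fun e _ => mul_nonneg (div_nonneg (hw e).le hW.le) (Real.exp_pos _).le)]
        congr 1
        rw [← Finset.sum_mul, ← Finset.sum_div, ← hWdef, div_self hW.ne', one_mul]
      · intro i j hij
        exact Disjoint.mono Set.inter_subset_right Set.inter_subset_right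
          ((Set.disjoint_singleton.2 hij).preimage F)
      · exact fun e => (hSmeas measurableSet_Ioi).inter (hFmeas (measurableSet_singleton e))
    -- finish via pi systems
    have hpiR : IsPiSystem ((Set.preimage S) '' Set.range Set.Ioi) :=
      isPiSystem_Ioi.comap S
    have hpiE : IsPiSystem ((Set.preimage F) '' Set.range fun e => ({e} : Set E)) := by
      apply IsPiSystem.comap
      rintro _ ⟨e, rfl⟩ _ ⟨f, rfl⟩ hne
      obtain ⟨x, hx⟩ := hne
      simp only [Set.mem_inter_iff, Set.mem_singleton_iff] at hx
      obtain ⟨rfl, rfl⟩ := hx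
      simpa using ⟨x, rfl⟩
    have hgenR : MeasurableSpace.comap S (inferInstance : MeasurableSpace ℝ)
        = MeasurableSpace.generateFrom ((Set.preimage S) '' Set.range Set.Ioi) := by
      conv_lhs => rw [BorelSpace.measurable_eq (α := ℝ), borel_eq_generateFrom_Ioi ℝ]
      rw [MeasurableSpace.comap_generateFrom]
    have hgenE : MeasurableSpace.comap F (inferInstance : MeasurableSpace E)
        = MeasurableSpace.generateFrom ((Set.preimage F) '' Set.range fun e => ({e} : Set E)) := by
      have hE : (inferInstance : MeasurableSpace E)
          = MeasurableSpace.generateFrom (Set.range fun e => ({e} : Set E)) := by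
        refine le_antisymm (fun t _ => ?_) (MeasurableSpace.generateFrom_le ?_)
        · rw [← Set.biUnion_of_singleton t]
          exact MeasurableSet.biUnion t.to_countable
            (fun e _ => MeasurableSpace.measurableSet_generateFrom ⟨e, rfl⟩)
        · rintro _ ⟨e, rfl⟩
          exact measurableSet_singleton e
      conv_lhs => rw [hE]
      rw [MeasurableSpace.comap_generateFrom]
    refine IndepSets.indep (Measurable.comap_le hSmeas) (Measurable.comap_le hFmeas)
      hpiR hpiE hgenR hgenE ?_
    rintro t1 t2 ⟨s1, ⟨a, rfl⟩, rfl⟩ ⟨s2, ⟨e, rfl⟩, rfl⟩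
    refine Filter.Eventually.of_forall fun u => ?_
    simp only [Kernel.const_apply]
    show P (S ⁻¹' Set.Ioi a ∩ F ⁻¹' {e}) = P (S ⁻¹' Set.Ioi a) * P (F ⁻¹' {e})
    rw [hkey e a, hSa a, hFe e, ← ENNReal.ofReal_mul (Real.exp_pos _).le]
    congr 1
    ring
end

section
/- Let m ≥ 3 be an integer, Λ > 0, and let M_1, …, M_m be independent identically distributed real random variables, each Exp(Λ)-distributed. Set Λ̄ = (m−1)/(M_1 + ⋯ + M_m). Then Λ̄ is square-integrable, E[Λ̄] = Λ, and Var(Λ̄) = Λ²/(m−2); consequently the relative standard error √(Var(Λ̄))/Λ equals 1/√(m−2). -/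
open scoped ENNReal NNReal
open MeasureTheory ProbabilityTheory Real Set


lemma my_map_add_prod_withDensity (f g : ℝ → ℝ≥0∞) (hf : Measurable f) (hg : Measurable g) :
    Measure.map (fun p : ℝ × ℝ => p.1 + p.2)
      ((volume.withDensity f).prod (volume.withDensity g)) =
    volume.withDensity (fun t => ∫⁻ s, f s * g (t - s)) := by
  ext A hA
  rw [Measure.map_apply measurable_add hA,
    Measure.prod_apply (measurable_add hA)]
  have key : ∀ x : ℝ, (volume.withDensity g) (Prod.mk x ⁻¹' ((fun p : ℝ × ℝ => p.1 + p.2) ⁻¹' A))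
      = ∫⁻ t, A.indicator 1 t * g (t - x) := by
    intro x
    have hset : Prod.mk x ⁻¹' ((fun p : ℝ × ℝ => p.1 + p.2) ⁻¹' A)
        = (fun y => x + y) ⁻¹' A := rfl
    rw [hset, withDensity_apply _ (hA.preimage (measurable_const_add x)),
      ← lintegral_indicator (hA.preimage (measurable_const_add x)) g]
    have : ∀ y : ℝ, ((fun y => x + y) ⁻¹' A).indicator g y = A.indicator 1 (x + y) * g y := by
      intro y
      by_cases hy : x + y ∈ A
      · simp [Set.indicator_of_mem, hy, Set.mem_preimage.mpr hy]
      · simp [Set.indicator_of_notMem, hy, fun h => hy (Set.mem_preimage.mp h)]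
    simp_rw [this]
    have := lintegral_sub_right_eq_self (μ := (volume : Measure ℝ))
      (f := fun y => A.indicator 1 (x + y) * g y) x
    rw [← this]
    congr 1 with t
    ring_nf
  simp_rw [key]
  have hmeas2 : Measurable (Function.uncurry fun x t : ℝ =>
      A.indicator (1 : ℝ → ℝ≥0∞) t * (f x * g (t - x))) := by
    apply Measurable.mul
    · exact (measurable_one.indicator hA).comp measurable_snd
    · exact (hf.comp measurable_fst).mul (hg.comp (measurable_snd.sub measurable_fst))
  rw [lintegral_withDensity_eq_lintegral_mul _ hf]
  · rw [withDensity_apply _ hA, ← lintegral_indicator hA]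
    calc ∫⁻ x, (f * fun x => ∫⁻ t, A.indicator 1 t * g (t - x)) x
        = ∫⁻ x, ∫⁻ t, A.indicator (1 : ℝ → ℝ≥0∞) t * (f x * g (t - x)) := by
          refine lintegral_congr fun x => ?_
          simp only [Pi.mul_apply]
          rw [← lintegral_const_mul _ (show Measurable fun t : ℝ =>
            A.indicator (1 : ℝ → ℝ≥0∞) t * g (t - x) from (measurable_one.indicator hA).mul (hg.comp (measurable_sub_const x)))]
          refine lintegral_congr fun t => ?_
          ring
      _ = ∫⁻ t, ∫⁻ x, A.indicator (1 : ℝ → ℝ≥0∞) t * (f x * g (t - x)) :=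
          lintegral_lintegral_swap hmeas2.aemeasurable
      _ = ∫⁻ t, A.indicator (fun t => ∫⁻ s, f s * g (t - s)) t := by
          refine lintegral_congr fun t => ?_
          rw [lintegral_const_mul _ (show Measurable fun x : ℝ =>
            f x * g (t - x) from hf.mul (hg.comp (measurable_id.const_sub t)))]
          by_cases ht : t ∈ A
          · simp [Set.indicator_of_mem ht]
          · simp [Set.indicator_of_notMem ht]
  · exact Measurable.lintegral_prod_right (f := fun x t : ℝ => A.indicator 1 t * g (t - x))
      (((measurable_one.indicator hA).comp measurable_snd).mul
        (hg.comp (measurable_snd.sub measurable_fst)))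

lemma my_conv_gammaPDF (n : ℕ) (hn : 1 ≤ n) {r : ℝ} (hr : 0 < r) (t : ℝ) :
    ∫⁻ s, gammaPDF n r s * gammaPDF 1 r (t - s) = gammaPDF (n + 1 : ℕ) r t := by
  have hcast : ((n : ℝ)) - 1 = ((n - 1 : ℕ) : ℝ) := by
    push_cast [Nat.cast_sub hn]; ring
  rcases lt_or_ge t 0 with ht | ht
  · rw [gammaPDF_of_neg (by exact_mod_cast ht)]
    rw [show (0 : ℝ≥0∞) = ∫⁻ _ : ℝ, 0 by simp]
    refine lintegral_congr fun s => ?_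
    rcases lt_or_ge s 0 with hs | hs
    · rw [gammaPDF_of_neg hs, zero_mul]
    · rw [gammaPDF_of_neg (show t - s < 0 by linarith), mul_zero]
  · -- t ≥ 0
    set c : ℝ := r ^ (n + 1) / Real.Gamma n * Real.exp (-(r * t)) with hc
    have hΓ : 0 < Real.Gamma n := Real.Gamma_pos_of_pos (by exact_mod_cast hn)
    have hcnn : 0 ≤ c := by positivity
    have hpoint : ∀ s : ℝ, gammaPDF n r s * gammaPDF 1 r (t - s)
        = (Icc 0 t).indicator (fun s => ENNReal.ofReal (c * s ^ (n - 1 : ℕ))) s := by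
      intro s
      rcases lt_or_ge s 0 with hs | hs
      · rw [gammaPDF_of_neg hs, zero_mul,
          Set.indicator_of_notMem (by simp [Set.mem_Icc]; intro h; linarith)]
      rcases lt_or_ge t s with hts | hts
      · rw [gammaPDF_of_neg (by linarith : t - s < 0), mul_zero,
          Set.indicator_of_notMem (by simp [Set.mem_Icc]; intro h; linarith)]
      · rw [Set.indicator_of_mem (Set.mem_Icc.mpr ⟨hs, hts⟩),
          gammaPDF_of_nonneg hs, gammaPDF_of_nonneg (by linarith : (0:ℝ) ≤ t - s),
          ← ENNReal.ofReal_mul (by positivity)]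
        congr 1
        rw [Real.Gamma_one, hcast, Real.rpow_natCast]
        rw [show (1 : ℝ) - 1 = 0 by ring, Real.rpow_zero, Real.rpow_one]
        rw [show ((n : ℝ)) = ((n : ℕ) : ℝ) by norm_cast, Real.rpow_natCast]
        have hexp : rexp (-(r * s)) * rexp (-(r * (t - s))) = rexp (-(r * t)) := by
          rw [← Real.exp_add]; congr 1; ring
        rw [hc]
        linear_combination (r ^ (n + 1) / Real.Gamma (n : ℝ) * s ^ (n - 1 : ℕ)) * hexp
    simp_rw [hpoint]
    rw [lintegral_indicator measurableSet_Icc]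
    have hint : IntegrableOn (fun s : ℝ => c * s ^ (n - 1 : ℕ)) (Icc 0 t) := by
      exact (continuous_const.mul (continuous_pow _)).integrableOn_Icc
    rw [← ofReal_integral_eq_lintegral_ofReal hint
      (by filter_upwards [ae_restrict_mem measurableSet_Icc] with s hs using
        mul_nonneg hcnn (pow_nonneg hs.1 _))]
    rw [gammaPDF_of_nonneg ht]
    congr 1
    rw [MeasureTheory.integral_Icc_eq_integral_Ioc, ← intervalIntegral.integral_of_le ht,
      intervalIntegral.integral_const_mul, integral_pow]
    have h1 : (n - 1 : ℕ) + 1 = n := Nat.succ_pred_eq_of_pos hn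
    rw [h1]
    have hΓ1 : Real.Gamma ((n : ℝ) + 1) = (n : ℝ) * Real.Gamma n :=
      Real.Gamma_add_one (by positivity)
    have : ((n + 1 : ℕ) : ℝ) - 1 = ((n : ℕ) : ℝ) := by push_cast; ring
    rw [this, Real.rpow_natCast]
    push_cast [hΓ1]
    have hn' : (0:ℝ) < n := by exact_mod_cast hn
    have h0 : (0:ℝ) ^ n = 0 := zero_pow (by omega)
    have hn1 : ((n - 1 : ℕ) : ℝ) + 1 = n := by rw [← hcast]; ring
    rw [h0, hn1, Real.rpow_natCast, hc]
    field_simp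
    ring

lemma my_measurable_gammaPDF (a r : ℝ) : Measurable (gammaPDF a r) :=
  ENNReal.measurable_ofReal.comp (measurable_gammaPDFReal a r)

lemma my_map_sum {Ω : Type*} [MeasurableSpace Ω] (P : Measure Ω) [IsProbabilityMeasure P]
    {ι : Type*} (M : ι → Ω → ℝ) (hmeas : ∀ i, Measurable (M i)) {Λ : ℝ} (hΛ : 0 < Λ)
    (hindep : iIndepFun M P)
    (hdist : ∀ i, Measure.map (M i) P = expMeasure Λ)
    (s : Finset ι) (hs : s.Nonempty) :
    Measure.map (fun ω => ∑ i ∈ s, M i ω) P = gammaMeasure (s.card : ℕ) Λ := by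
  classical
  induction' s using Finset.induction_on with i s hi ih
  · exact absurd hs (by simp)
  · rcases s.eq_empty_or_nonempty with rfl | hne
    · simp only [Finset.sum_insert (Finset.notMem_empty i), Finset.sum_empty, add_zero,
        Finset.card_insert_of_notMem (Finset.notMem_empty i), Finset.card_empty]
      rw [hdist i]
      norm_num [expMeasure]
    · have hkey := ih hne
      have hS : Measurable (fun ω => ∑ j ∈ s, M j ω) :=
        Finset.measurable_sum s fun j _ => hmeas j
      have hInd : IndepFun (∑ j ∈ s, M j) (M i) P :=
        hindep.indepFun_finsetSum_of_notMem hmeas hi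
      have hInd' : IndepFun (fun ω => ∑ j ∈ s, M j ω) (M i) P := by
        have : (∑ j ∈ s, M j) = fun ω => ∑ j ∈ s, M j ω := by
          ext ω; simp [Finset.sum_apply]
        rwa [this] at hInd
      have hmap : Measure.map (fun ω => ((fun ω => ∑ j ∈ s, M j ω) ω, M i ω)) P
          = (Measure.map (fun ω => ∑ j ∈ s, M j ω) P).prod (Measure.map (M i) P) :=
        (indepFun_iff_map_prod_eq_prod_map_map hS.aemeasurable (hmeas i).aemeasurable).mp hInd'
      have hfun : (fun ω => ∑ j ∈ insert i s, M j ω)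
          = (fun p : ℝ × ℝ => p.1 + p.2) ∘ (fun ω => (∑ j ∈ s, M j ω, M i ω)) := by
        ext ω; simp [Finset.sum_insert hi]; ring
      rw [hfun, ← Measure.map_map measurable_add (hS.prodMk (hmeas i)), hmap, hkey, hdist i]
      rw [show expMeasure Λ = gammaMeasure 1 Λ from rfl]
      unfold gammaMeasure
      rw [my_map_add_prod_withDensity _ _ (my_measurable_gammaPDF _ _) (my_measurable_gammaPDF _ _)]
      rw [Finset.card_insert_of_notMem hi]
      congr 1
      ext t
      rw [my_conv_gammaPDF s.card (Nat.one_le_iff_ne_zero.mpr (Finset.card_ne_zero_of_mem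
        (hne.choose_spec))) hΛ t]

lemma my_measurable_gammaPDF' (a r : ℝ) : Measurable (gammaPDF a r) :=
  ENNReal.measurable_ofReal.comp (measurable_gammaPDFReal a r)

lemma my_lintegral_gamma_inv_pow (n k : ℕ) (hk : k < n) {r : ℝ} (hr : 0 < r) :
    ∫⁻ x, ENNReal.ofReal (|x|⁻¹ ^ k) ∂(gammaMeasure n r)
      = ENNReal.ofReal (r ^ k * Real.Gamma ((n : ℝ) - k) / Real.Gamma n) := by
  have hn0 : (0 : ℝ) < n := by exact_mod_cast Nat.zero_lt_of_lt hk
  have ha : (0 : ℝ) < (n : ℝ) - k := by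
    have : (k : ℝ) < n := by exact_mod_cast hk
    linarith
  have hΓn : 0 < Real.Gamma (n : ℝ) := Real.Gamma_pos_of_pos hn0
  have hΓa : 0 < Real.Gamma ((n : ℝ) - k) := Real.Gamma_pos_of_pos ha
  have hg : Measurable fun x : ℝ => ENNReal.ofReal (|x|⁻¹ ^ k) :=
    ENNReal.measurable_ofReal.comp ((measurable_abs.inv).pow_const k)
  unfold gammaMeasure
  rw [lintegral_withDensity_eq_lintegral_mul _ (my_measurable_gammaPDF' _ _) hg]
  rw [← lintegral_add_compl _ measurableSet_Ici (μ := volume), compl_Ici]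
  have hIio : ∫⁻ x in Iio 0, (gammaPDF n r * fun x => ENNReal.ofReal (|x|⁻¹ ^ k)) x = 0 := by
    rw [setLIntegral_congr_fun (g := fun _ => (0:ℝ≥0∞)) measurableSet_Iio
      (fun x (hx : x < 0) => by
        simp [Pi.mul_apply, gammaPDF_of_neg hx])]
    simp
  rw [hIio, add_zero]
  rw [setLIntegral_congr (Ioi_ae_eq_Ici (a := (0:ℝ))).symm]
  set c₀ : ℝ := r ^ (n : ℝ) / Real.Gamma n with hc₀
  have hc₀nn : 0 ≤ c₀ := by positivity
  have hpt : ∀ x ∈ Ioi (0:ℝ), (gammaPDF n r * fun x => ENNReal.ofReal (|x|⁻¹ ^ k)) x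
      = ENNReal.ofReal (c₀ * (x ^ ((n : ℝ) - k - 1) * Real.exp (-(r * x)))) := by
    intro x hx
    have hx : (0:ℝ) < x := hx
    simp only [Pi.mul_apply]
    rw [gammaPDF_of_nonneg hx.le, ← ENNReal.ofReal_mul (by positivity)]
    congr 1
    rw [abs_of_pos hx]
    have h1 : x⁻¹ ^ k = x ^ (-(k : ℝ)) := by
      rw [Real.rpow_neg hx.le, Real.rpow_natCast]
      exact inv_pow x k
    have h2 : x ^ ((n:ℝ) - 1) * x ^ (-(k:ℝ)) = x ^ ((n:ℝ) - k - 1) := by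
      rw [← Real.rpow_add hx]; ring_nf
    rw [h1, hc₀]
    calc r ^ (n:ℝ) / Real.Gamma ↑n * x ^ ((n:ℝ) - 1) * Real.exp (-(r * x)) * x ^ (-(k:ℝ))
        = r ^ (n:ℝ) / Real.Gamma ↑n * (x ^ ((n:ℝ) - 1) * x ^ (-(k:ℝ))) * Real.exp (-(r * x)) := by
          ring
      _ = _ := by rw [h2]; ring
  rw [setLIntegral_congr_fun measurableSet_Ioi hpt]
  have hint : IntegrableOn (fun x : ℝ => x ^ ((n:ℝ) - k - 1) * Real.exp (-(r * x))) (Ioi 0) := by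
    have := integrableOn_rpow_mul_exp_neg_mul_rpow
      (s := (n:ℝ) - k - 1) (p := 1) (b := r) (by linarith) zero_lt_one hr
    refine this.congr_fun (fun x hx => ?_) measurableSet_Ioi
    simp only [Real.rpow_one]
    ring_nf
  have hnn : 0 ≤ᵐ[volume.restrict (Ioi (0:ℝ))]
      fun x => x ^ ((n:ℝ) - k - 1) * Real.exp (-(r * x)) := by
    filter_upwards [ae_restrict_mem measurableSet_Ioi] with x hx
    have : (0:ℝ) < x := hx
    positivity
  calc ∫⁻ x in Ioi 0, ENNReal.ofReal (c₀ * (x ^ ((n : ℝ) - k - 1) * Real.exp (-(r * x))))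
      = ∫⁻ x in Ioi 0, ENNReal.ofReal c₀
          * ENNReal.ofReal (x ^ ((n : ℝ) - k - 1) * Real.exp (-(r * x))) := by
        refine setLIntegral_congr_fun measurableSet_Ioi (fun x hx => ?_)
        rw [ENNReal.ofReal_mul hc₀nn]
    _ = ENNReal.ofReal c₀
          * ∫⁻ x in Ioi 0, ENNReal.ofReal (x ^ ((n : ℝ) - k - 1) * Real.exp (-(r * x))) := by
        rw [lintegral_const_mul]
        fun_prop
    _ = ENNReal.ofReal c₀ * ENNReal.ofReal ((1 / r) ^ ((n:ℝ) - k) * Real.Gamma ((n:ℝ) - k)) := by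
        rw [← ofReal_integral_eq_lintegral_ofReal hint hnn,
          integral_rpow_mul_exp_neg_mul_Ioi ha hr]
    _ = ENNReal.ofReal (r ^ k * Real.Gamma ((n : ℝ) - k) / Real.Gamma n) := by
        rw [← ENNReal.ofReal_mul hc₀nn]
        congr 1
        rw [hc₀, Real.div_rpow (by norm_num) hr.le, Real.one_rpow]
        rw [show (1:ℝ) / r ^ ((n:ℝ) - k) = r ^ (-((n:ℝ) - k)) by
          rw [Real.rpow_neg hr.le]; ring]
        have : r ^ (n:ℝ) * r ^ (-((n:ℝ) - k)) = r ^ (k:ℝ) := by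
          rw [← Real.rpow_add hr]; ring_nf
        calc r ^ (n:ℝ) / Real.Gamma ↑n * (r ^ (-((n:ℝ)-k)) * Real.Gamma ((n:ℝ)-k))
            = (r ^ (n:ℝ) * r ^ (-((n:ℝ)-k))) * Real.Gamma ((n:ℝ)-k) / Real.Gamma ↑n := by ring
          _ = _ := by rw [this, Real.rpow_natCast]

lemma my_gamma_integrable_inv_pow (n k : ℕ) (hk : k < n) {r : ℝ} (hr : 0 < r) :
    Integrable (fun x => |x|⁻¹ ^ k) (gammaMeasure n r) := by
  have hmeas : Measurable fun x : ℝ => |x|⁻¹ ^ k := (measurable_abs.inv).pow_const k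
  refine ⟨hmeas.aestronglyMeasurable, ?_⟩
  rw [hasFiniteIntegral_iff_norm]
  have : ∀ x : ℝ, ENNReal.ofReal ‖|x|⁻¹ ^ k‖ = ENNReal.ofReal (|x|⁻¹ ^ k) := by
    intro x; rw [Real.norm_eq_abs, abs_of_nonneg (by positivity)]
  simp_rw [this, my_lintegral_gamma_inv_pow n k hk hr]
  exact ENNReal.ofReal_lt_top

lemma my_gamma_integral_inv_pow (n k : ℕ) (hk : k < n) {r : ℝ} (hr : 0 < r) :
    ∫ x, |x|⁻¹ ^ k ∂(gammaMeasure n r)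
      = r ^ k * Real.Gamma ((n : ℝ) - k) / Real.Gamma n := by
  have hmeas : Measurable fun x : ℝ => |x|⁻¹ ^ k := (measurable_abs.inv).pow_const k
  rw [integral_eq_lintegral_of_nonneg_ae (ae_of_all _ fun x => by positivity)
    hmeas.aestronglyMeasurable, my_lintegral_gamma_inv_pow n k hk hr,
    ENNReal.toReal_ofReal]
  have h1 : (0:ℝ) < (n:ℝ) - k := by
    have : (k:ℝ) < n := by exact_mod_cast hk
    linarith
  have h2 : 0 < Real.Gamma ((n:ℝ) - k) := Real.Gamma_pos_of_pos h1
  have h3 : 0 < Real.Gamma (n:ℝ) := Real.Gamma_pos_of_pos (by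
    exact_mod_cast Nat.zero_lt_of_lt hk)
  positivity

lemma my_gamma_ae_nonneg (n : ℕ) (r : ℝ) : ∀ᵐ x ∂(gammaMeasure n r), 0 ≤ x := by
  rw [ae_iff]
  have : {x : ℝ | ¬0 ≤ x} = Iio 0 := by ext x; simp only [mem_setOf_eq, mem_Iio, not_le]
  rw [this]
  unfold gammaMeasure
  rw [withDensity_apply _ measurableSet_Iio]
  rw [setLIntegral_congr_fun (g := fun _ => (0:ℝ≥0∞)) measurableSet_Iio
    (fun x (hx : x < 0) => gammaPDF_of_neg hx)]
  simp

/-- For `m ≥ 3` i.i.d. `Exp(Λ)` variables `M_1, …, M_m`, the estimator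
`Λ̄ = (m-1) / (M_1 + ⋯ + M_m)` is square-integrable, unbiased (`E[Λ̄] = Λ`), has variance
`Λ²/(m-2)`, and relative standard error `√Var(Λ̄)/Λ = 1/√(m-2)`. -/
theorem stmt_7
    {Ω : Type*} [MeasurableSpace Ω] (P : Measure Ω) [IsProbabilityMeasure P]
    (m : ℕ) (hm : 3 ≤ m) (Λ : ℝ) (hΛ : 0 < Λ)
    (M : Fin m → Ω → ℝ) (hmeas : ∀ i, Measurable (M i))
    (hindep : iIndepFun M P)
    (hdist : ∀ i, Measure.map (M i) P = expMeasure Λ) :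
    MemLp (fun ω => ((m : ℝ) - 1) / ∑ i, M i ω) 2 P ∧
    ∫ ω, ((m : ℝ) - 1) / ∑ i, M i ω ∂P = Λ ∧
    variance (fun ω => ((m : ℝ) - 1) / ∑ i, M i ω) P = Λ ^ 2 / ((m : ℝ) - 2) ∧
    Real.sqrt (variance (fun ω => ((m : ℝ) - 1) / ∑ i, M i ω) P) / Λ
      = 1 / Real.sqrt ((m : ℝ) - 2) := by
  have hmpos : 0 < m := by omega
  haveI : Nonempty (Fin m) := ⟨⟨0, hmpos⟩⟩
  set c : ℝ := (m : ℝ) - 1 with hc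
  set S : Ω → ℝ := fun ω => ∑ i, M i ω with hS
  have hSmeas : Measurable S := Finset.measurable_sum _ fun i _ => hmeas i
  have hmap : Measure.map S P = gammaMeasure (m : ℕ) Λ := by
    have := my_map_sum P M hmeas hΛ hindep hdist Finset.univ Finset.univ_nonempty
    simpa [Finset.card_univ] using this
  set ν : Measure ℝ := gammaMeasure (m : ℕ) Λ with hν
  have hgmeas : Measurable (fun x : ℝ => c / x) := measurable_const.div measurable_id
  -- basic real number facts
  have hm1 : (0:ℝ) < (m:ℝ) - 1 := by
    have : (3:ℝ) ≤ m := by exact_mod_cast hm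
    linarith
  have hm2 : (0:ℝ) < (m:ℝ) - 2 := by
    have : (3:ℝ) ≤ m := by exact_mod_cast hm
    linarith
  have hΓ3 : 0 < Real.Gamma ((m:ℝ) - 2) := Real.Gamma_pos_of_pos hm2
  have hΓ2 : Real.Gamma ((m:ℝ) - 1) = ((m:ℝ) - 2) * Real.Gamma ((m:ℝ) - 2) := by
    have := Real.Gamma_add_one (s := (m:ℝ) - 2) hm2.ne'
    rw [show (m:ℝ) - 2 + 1 = (m:ℝ) - 1 by ring] at this
    exact this
  have hΓ1 : Real.Gamma (m:ℝ) = ((m:ℝ) - 1) * (((m:ℝ) - 2) * Real.Gamma ((m:ℝ) - 2)) := by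
    have := Real.Gamma_add_one (s := (m:ℝ) - 1) hm1.ne'
    rw [show (m:ℝ) - 1 + 1 = (m:ℝ) by ring] at this
    rw [this, hΓ2]
  -- moments
  have hcast1 : ((m:ℝ)) - (1:ℕ) = (m:ℝ) - 1 := by norm_num
  have hcast2 : ((m:ℝ)) - (2:ℕ) = (m:ℝ) - 2 := by norm_num
  have hA1 : ∫ x, |x|⁻¹ ^ 1 ∂ν = Λ / ((m:ℝ) - 1) := by
    rw [hν, my_gamma_integral_inv_pow m 1 (by omega) hΛ, hcast1, hΓ2, hΓ1]
    field_simp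
  have hA2 : ∫ x, |x|⁻¹ ^ 2 ∂ν = Λ ^ 2 / (((m:ℝ) - 1) * ((m:ℝ) - 2)) := by
    rw [hν, my_gamma_integral_inv_pow m 2 (by omega) hΛ, hcast2, hΓ1]
    field_simp
  have hae : ∀ᵐ x ∂ν, 0 ≤ x := my_gamma_ae_nonneg m Λ
  -- MemLp of g over ν
  have hsq : (fun x : ℝ => (c / x) ^ 2) = fun x => c ^ 2 * |x|⁻¹ ^ 2 := by
    ext x
    rw [div_pow, inv_pow, sq_abs, div_eq_mul_inv]
  have hmemg : MemLp (fun x : ℝ => c / x) 2 ν := by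
    rw [memLp_two_iff_integrable_sq hgmeas.aestronglyMeasurable, hsq]
    exact (my_gamma_integrable_inv_pow m 2 (by omega) hΛ).const_mul _
  have hgm' : AEStronglyMeasurable (fun x : ℝ => c / x) (Measure.map S P) := by
    rw [hmap]; exact hgmeas.aestronglyMeasurable
  have hmemg' : MemLp (fun x : ℝ => c / x) 2 (Measure.map S P) := by
    rw [hmap]; exact hmemg
  have hmem : MemLp (fun ω => c / S ω) 2 P :=
    (memLp_map_measure_iff hgm' hSmeas.aemeasurable).mp hmemg'
  -- expectation
  have hgae : (fun x : ℝ => c / x) =ᵐ[ν] fun x => c * |x|⁻¹ ^ 1 := by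
    filter_upwards [hae] with x hx
    rw [pow_one, abs_of_nonneg hx, div_eq_mul_inv]
  have hEg : ∫ x, c / x ∂ν = Λ := by
    rw [integral_congr_ae hgae, integral_const_mul, hA1, hc]
    field_simp
  have hE : ∫ ω, c / S ω ∂P = Λ := by
    rw [← integral_map hSmeas.aemeasurable hgm', hmap]
    exact hEg
  -- second moment
  have hEg2 : ∫ x, (c / x) ^ 2 ∂ν = c ^ 2 * (Λ ^ 2 / (((m:ℝ) - 1) * ((m:ℝ) - 2))) := by
    rw [hsq, integral_const_mul, hA2]
  have hgm2 : AEStronglyMeasurable (fun x : ℝ => (c / x) ^ 2) (Measure.map S P) := by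
    rw [hmap]; exact (hgmeas.pow_const 2).aestronglyMeasurable
  have hE2 : ∫ ω, (c / S ω) ^ 2 ∂P = c ^ 2 * (Λ ^ 2 / (((m:ℝ) - 1) * ((m:ℝ) - 2))) := by
    rw [← integral_map hSmeas.aemeasurable hgm2, hmap]
    exact hEg2
  -- variance
  have hvar : variance (fun ω => c / S ω) P = Λ ^ 2 / ((m:ℝ) - 2) := by
    rw [variance_eq_sub hmem]
    have hpow : (fun ω => c / S ω) ^ 2 = fun ω => (c / S ω) ^ 2 := by
      ext ω; simp [pow_two]
    rw [hpow, hE2, hE, hc]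
    field_simp
    ring
  refine ⟨hmem, hE, hvar, ?_⟩
  rw [hvar, Real.sqrt_div (sq_nonneg Λ), Real.sqrt_sq hΛ.le]
  rw [div_right_comm, div_self hΛ.ne']
end

section
/- Let Ω be a finite set with weights w(x) > 0 for x ∈ Ω, and for subsets S ⊆ Ω write w(S) = Σ_{x∈S} w(x). Let (X_x)_{x∈Ω} be independent random variables with X_x Exp(w(x))-distributed, and for a nonempty subset A ⊆ Ω write A* = min_{x∈A} X_x. Then for all nonempty subsets A, B ⊆ Ω, P(B* ≤ A*) = w(B)/w(A ∪ B). -/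
open MeasureTheory ProbabilityTheory Real Set

lemma expMeasure_apply {r : ℝ} {s : Set ℝ} (hs : MeasurableSet s) :
    expMeasure r s = ∫⁻ y in s, exponentialPDF r y := by
  rw [expMeasure, gammaMeasure, withDensity_apply _ hs]; rfl

lemma expMeasure_Iic' {r : ℝ} (hr : 0 < r) (t : ℝ) :
    expMeasure r (Iic t) = ENNReal.ofReal (if 0 ≤ t then 1 - rexp (-(r * t)) else 0) := by
  rw [expMeasure_apply measurableSet_Iic, lintegral_exponentialPDF_eq_antiDeriv hr]

lemma expMeasure_Ioi' {r : ℝ} (hr : 0 < r) (t : ℝ) :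
    expMeasure r (Ioi t) = ENNReal.ofReal (rexp (-(r * max t 0))) := by
  have := isProbabilityMeasure_expMeasure hr
  have h : Ioi t = (Iic t)ᶜ := by simp
  rw [h, measure_compl measurableSet_Iic (measure_ne_top _ _), measure_univ, expMeasure_Iic' hr]
  rcases le_or_gt 0 t with h0 | h0
  · rw [if_pos h0, max_eq_left h0, ENNReal.ofReal_sub _ (exp_nonneg _), ENNReal.ofReal_one,
      ENNReal.sub_sub_cancel ENNReal.one_ne_top]
    rw [ENNReal.ofReal_le_one]
    exact exp_le_one_iff.2 (by nlinarith)
  · rw [if_neg (not_le.2 h0), max_eq_right h0.le]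
    simp

lemma expMeasure_Ici' {r : ℝ} (hr : 0 < r) (t : ℝ) :
    expMeasure r (Ici t) = ENNReal.ofReal (rexp (-(r * max t 0))) := by
  have hsing : expMeasure r {t} = 0 := by
    rw [expMeasure_apply (measurableSet_singleton t)]
    exact setLIntegral_measure_zero _ _ (measure_singleton t)
  have : expMeasure r (Ici t) = expMeasure r (Ioi t) := by
    refine le_antisymm ?_ (measure_mono Ioi_subset_Ici_self)
    calc expMeasure r (Ici t) ≤ expMeasure r ({t} ∪ Ioi t) := by
          apply measure_mono; intro x hx
          rcases eq_or_lt_of_le (mem_Ici.1 hx) with h | h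
          · exact Or.inl h.symm
          · exact Or.inr h
      _ ≤ expMeasure r {t} + expMeasure r (Ioi t) := measure_union_le _ _
      _ = expMeasure r (Ioi t) := by rw [hsing, zero_add]
  rw [this, expMeasure_Ioi' hr]

lemma measurable_finset_inf' {ι Ω : Type*} [MeasurableSpace Ω] {S : Finset ι} (hS : S.Nonempty)
    (f : ι → Ω → ℝ) (hf : ∀ x, Measurable (f x)) :
    Measurable fun ω => S.inf' hS fun x => f x ω := by
  induction hS using Finset.Nonempty.cons_induction with
  | singleton a => simpa using hf a
  | cons a s ha hs ih =>
    have key : (fun ω => (Finset.cons a s ha).inf' (Finset.cons_nonempty ha) fun x => f x ω)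
        = fun ω => f a ω ⊓ s.inf' hs fun x => f x ω :=
      funext fun ω => Finset.inf'_cons hs _
    rw [key]
    exact (hf a).inf ih

lemma measurable_univ_inf' {κ : Type*} [Fintype κ] [Nonempty κ] :
    Measurable fun v : κ → ℝ => (Finset.univ : Finset κ).inf' Finset.univ_nonempty v :=
  measurable_finset_inf' Finset.univ_nonempty (fun i (v : κ → ℝ) => v i) fun i => measurable_pi_apply i

lemma inf'_univ_subtype {ι : Type*} (s : Finset ι) (hs : s.Nonempty) (f : ι → ℝ) :
    haveI : Nonempty ↥s := ⟨⟨hs.choose, hs.choose_spec⟩⟩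
    ((Finset.univ : Finset ↥s).inf' Finset.univ_nonempty fun i => f i) = s.inf' hs f := by
  haveI : Nonempty ↥s := ⟨⟨hs.choose, hs.choose_spec⟩⟩
  apply le_antisymm
  · exact Finset.le_inf' _ _ fun x hx => Finset.inf'_le _ (Finset.mem_univ (⟨x, hx⟩ : ↥s))
  · exact Finset.le_inf' _ _ fun i _ => Finset.inf'_le _ i.2

lemma map_inf'_eq_expMeasure
    {Ω : Type*} [MeasurableSpace Ω] (P : Measure Ω) [IsProbabilityMeasure P]
    {ι : Type*} [Fintype ι]
    (w : ι → ℝ) (hw : ∀ x, 0 < w x)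
    (X : ι → Ω → ℝ) (hmeas : ∀ x, Measurable (X x))
    (hindep : iIndepFun X P)
    (hdist : ∀ x, Measure.map (X x) P = expMeasure (w x))
    (S : Finset ι) (hS : S.Nonempty) :
    Measure.map (fun ω => S.inf' hS fun x => X x ω) P = expMeasure (∑ x ∈ S, w x) := by
  have hpos : 0 < ∑ x ∈ S, w x := Finset.sum_pos (fun x _ => hw x) hS
  have hYm : Measurable fun ω => S.inf' hS fun x => X x ω :=
    measurable_finset_inf' hS X hmeas
  have h1 : IsProbabilityMeasure (Measure.map (fun ω => S.inf' hS fun x => X x ω) P) :=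
    Measure.isProbabilityMeasure_map hYm.aemeasurable
  have h2 := isProbabilityMeasure_expMeasure hpos
  refine Measure.ext_of_Iic _ _ fun t => ?_
  rw [Measure.map_apply hYm measurableSet_Iic, expMeasure_Iic' hpos]
  have hset : (fun ω => S.inf' hS fun x => X x ω) ⁻¹' (Iic t)
      = (⋂ x ∈ S, X x ⁻¹' Ioi t)ᶜ := by
    ext ω
    simp only [mem_preimage, mem_Iic, mem_compl_iff, mem_iInter, mem_Ioi]
    rw [← not_lt, Finset.lt_inf'_iff]
  have hInter := hindep.meas_biInter (S := S) (s := fun x => X x ⁻¹' Ioi t)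
    (fun i _ => ⟨Ioi t, measurableSet_Ioi, rfl⟩)
  have hmeasInter : MeasurableSet (⋂ x ∈ S, X x ⁻¹' Ioi t) :=
    MeasurableSet.biInter S.countable_toSet fun x _ => (hmeas x) measurableSet_Ioi
  rw [hset, measure_compl hmeasInter (measure_ne_top _ _), measure_univ, hInter]
  have hterm : ∀ x ∈ S, P (X x ⁻¹' Ioi t) = ENNReal.ofReal (rexp (-(w x * max t 0))) := by
    intro x _
    rw [← Measure.map_apply (hmeas x) measurableSet_Ioi, hdist x, expMeasure_Ioi' (hw x)]
  rw [Finset.prod_congr rfl hterm, ← ENNReal.ofReal_prod_of_nonneg (fun i _ => exp_nonneg _),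
    ← Real.exp_sum]
  have hsum : ∑ x ∈ S, -(w x * max t 0) = -((∑ x ∈ S, w x) * max t 0) := by
    rw [Finset.sum_neg_distrib, Finset.sum_mul]
  rw [hsum]
  rcases le_or_gt 0 t with h0 | h0
  · rw [if_pos h0, max_eq_left h0, ENNReal.ofReal_sub _ (exp_nonneg _), ENNReal.ofReal_one]
  · rw [if_neg (not_le.2 h0), max_eq_right h0.le]
    simp

lemma prob_le_of_exp {Ω : Type*} [MeasurableSpace Ω] (P : Measure Ω) [IsProbabilityMeasure P]
    {Y Z : Ω → ℝ} (hY : Measurable Y) (hZ : Measurable Z) {a b : ℝ} (ha : 0 < a) (hb : 0 < b)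
    (hYd : Measure.map Y P = expMeasure a) (hZd : Measure.map Z P = expMeasure b)
    (hind : IndepFun Y Z P) :
    P {ω | Y ω ≤ Z ω} = ENNReal.ofReal (a / (a + b)) := by
  haveI := isProbabilityMeasure_expMeasure ha
  haveI := isProbabilityMeasure_expMeasure hb
  have hmap : Measure.map (fun ω => (Y ω, Z ω)) P = (expMeasure a).prod (expMeasure b) := by
    rw [← hYd, ← hZd]
    exact (indepFun_iff_map_prod_eq_prod_map_map hY.aemeasurable hZ.aemeasurable).1 hind
  have hs : MeasurableSet {p : ℝ × ℝ | p.1 ≤ p.2} :=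
    measurableSet_le measurable_fst measurable_snd
  have : P {ω | Y ω ≤ Z ω}
      = (Measure.map (fun ω => (Y ω, Z ω)) P) {p : ℝ × ℝ | p.1 ≤ p.2} := by
    rw [Measure.map_apply (hY.prodMk hZ) hs]; rfl
  rw [this, hmap, Measure.prod_apply hs]
  have hpre : ∀ y : ℝ, (Prod.mk y ⁻¹' {p : ℝ × ℝ | p.1 ≤ p.2}) = Ici y := fun y => rfl
  have hcongr : (fun y => expMeasure b (Prod.mk y ⁻¹' {p : ℝ × ℝ | p.1 ≤ p.2}))
      = fun y => ENNReal.ofReal (rexp (-(b * max y 0))) := by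
    funext y; rw [hpre y, expMeasure_Ici' hb]
  rw [hcongr]
  have hwd : expMeasure a = volume.withDensity (exponentialPDF a) := rfl
  have hfm : Measurable fun y : ℝ => ENNReal.ofReal (rexp (-(b * max y 0))) := by
    apply Measurable.ennreal_ofReal
    exact (measurable_const.mul (measurable_id.max measurable_const)).neg.exp
  have hd : Measurable (exponentialPDF a) := (measurable_exponentialPDFReal a).ennreal_ofReal
  have hd2 : Measurable (exponentialPDF (a + b)) :=
    (measurable_exponentialPDFReal (a + b)).ennreal_ofReal
  rw [hwd, lintegral_withDensity_eq_lintegral_mul _ hd hfm]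
  simp only [Pi.mul_apply]
  have hpt : ∀ y : ℝ, exponentialPDF a y * ENNReal.ofReal (rexp (-(b * max y 0)))
      = ENNReal.ofReal (a / (a + b)) * exponentialPDF (a + b) y := by
    intro y
    rcases le_or_gt 0 y with h0 | h0
    · rw [exponentialPDF_of_nonneg h0, exponentialPDF_of_nonneg h0, max_eq_left h0,
        ← ENNReal.ofReal_mul (by positivity), ← ENNReal.ofReal_mul (by positivity)]
      congr 1
      rw [mul_assoc, ← Real.exp_add]
      have h1 : -(a * y) + -(b * y) = -((a + b) * y) := by ring
      rw [h1]
      field_simp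
    · rw [exponentialPDF_of_neg h0, exponentialPDF_of_neg h0, zero_mul, mul_zero]
  rw [lintegral_congr fun y => hpt y, lintegral_const_mul _ hd2,
    lintegral_exponentialPDF_eq_one (by linarith), mul_one]

/-- For coordinated min-sketch cells `A* = min_{x ∈ A} X x` and
`B* = min_{x ∈ B} X x` of nonempty subsets `A, B` of a finite weighted set, where the `X x`
are independent `Exp(w x)` variables, `P(B* ≤ A*) = w(B) / w(A ∪ B)`. -/
theorem stmt_8
    {Ω : Type*} [MeasurableSpace Ω] (P : Measure Ω) [IsProbabilityMeasure P]
    {ι : Type*} [Fintype ι] [DecidableEq ι]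
    (w : ι → ℝ) (hw : ∀ x, 0 < w x)
    (X : ι → Ω → ℝ) (hmeas : ∀ x, Measurable (X x))
    (hindep : iIndepFun X P)
    (hdist : ∀ x, Measure.map (X x) P = expMeasure (w x))
    (A B : Finset ι) (hA : A.Nonempty) (hB : B.Nonempty) :
    P {ω | B.inf' hB (fun x => X x ω) ≤ A.inf' hA (fun x => X x ω)}
      = ENNReal.ofReal ((∑ x ∈ B, w x) / ∑ x ∈ A ∪ B, w x) := by
  classical
  by_cases hA'e : A \ B = ∅
  · have hsub : A ⊆ B := by rwa [Finset.sdiff_eq_empty_iff_subset] at hA'e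
    have hset : {ω | B.inf' hB (fun x => X x ω) ≤ A.inf' hA (fun x => X x ω)} = Set.univ := by
      ext ω
      simp only [Set.mem_setOf_eq, Set.mem_univ, iff_true]
      exact Finset.inf'_mono _ hsub hA
    have hU : A ∪ B = B := Finset.union_eq_right.mpr hsub
    rw [hset, measure_univ, hU,
      div_self (ne_of_gt (Finset.sum_pos (fun x _ => hw x) hB)), ENNReal.ofReal_one]
  · have hA'ne : (A \ B).Nonempty := Finset.nonempty_iff_ne_empty.2 hA'e
    set Y := fun ω => B.inf' hB fun x => X x ω with hYdef
    set Z := fun ω => (A \ B).inf' hA'ne fun x => X x ω with hZdef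
    have hset : {ω | Y ω ≤ A.inf' hA fun x => X x ω} = {ω | Y ω ≤ Z ω} := by
      ext ω
      simp only [Set.mem_setOf_eq]
      constructor
      · intro h
        exact h.trans (Finset.inf'_mono _ Finset.sdiff_subset hA'ne)
      · intro h
        apply Finset.le_inf'
        intro x hx
        by_cases hxB : x ∈ B
        · exact Finset.inf'_le _ hxB
        · exact h.trans (Finset.inf'_le _ (Finset.mem_sdiff.mpr ⟨hx, hxB⟩))
    haveI hBn : Nonempty ↥B := ⟨⟨hB.choose, hB.choose_spec⟩⟩
    haveI hA'n : Nonempty ↥(A \ B) := ⟨⟨hA'ne.choose, hA'ne.choose_spec⟩⟩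
    have hdisj : Disjoint B (A \ B) := Finset.sdiff_disjoint.symm
    have h1 := hindep.indepFun_finset B (A \ B) hdisj hmeas
    have hφ : Measurable fun v : ↥B → ℝ =>
        (Finset.univ : Finset ↥B).inf' Finset.univ_nonempty v :=
      measurable_univ_inf'
    have hψ : Measurable fun v : ↥(A \ B) → ℝ =>
        (Finset.univ : Finset ↥(A \ B)).inf' Finset.univ_nonempty v :=
      measurable_univ_inf'
    have hind : IndepFun Y Z P := by
      have h2 := h1.comp hφ hψ
      have e1 : ((fun v : ↥B → ℝ => (Finset.univ : Finset ↥B).inf' Finset.univ_nonempty v)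
          ∘ fun a (i : ↥B) => X i a) = Y := by
        funext ω; exact inf'_univ_subtype B hB fun x => X x ω
      have e2 : ((fun v : ↥(A \ B) → ℝ =>
            (Finset.univ : Finset ↥(A \ B)).inf' Finset.univ_nonempty v)
          ∘ fun a (i : ↥(A \ B)) => X i a) = Z := by
        funext ω; exact inf'_univ_subtype (A \ B) hA'ne fun x => X x ω
      rwa [e1, e2] at h2
    have hYm : Measurable Y := measurable_finset_inf' hB X hmeas
    have hZm : Measurable Z := measurable_finset_inf' hA'ne X hmeas
    have hBpos : 0 < ∑ x ∈ B, w x := Finset.sum_pos (fun x _ => hw x) hB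
    have hA'pos : 0 < ∑ x ∈ A \ B, w x := Finset.sum_pos (fun x _ => hw x) hA'ne
    have hYd := map_inf'_eq_expMeasure P w hw X hmeas hindep hdist B hB
    have hZd := map_inf'_eq_expMeasure P w hw X hmeas hindep hdist (A \ B) hA'ne
    have := prob_le_of_exp P hYm hZm hBpos hA'pos hYd hZd hind
    rw [hset, this]
    congr 1
    have : ∑ x ∈ A ∪ B, w x = (∑ x ∈ B, w x) + ∑ x ∈ A \ B, w x := by
      rw [← Finset.sdiff_union_self_eq_union, Finset.sum_union Finset.sdiff_disjoint, add_comm]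
    rw [this]
end
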